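/- In the formal double zeta space D_k, Euler's sum formula holds for every k \ge 3: \sum_{r=1}^{k-2} Z_{r, k-r} = Z_k. (It follows from the defining double shuffle relations by summing the relation for (r, s) = (r, k-r) appropriately, or directly from the relation with s = 1.) -/
import Mathlib


/-- Euler's sum formula in the formal double zeta space `D_k`, `k ≥ 3`:
in any realization `Z, Zk` of the defining double shuffle relations,
`∑_{r=1}^{k-2} Z_{r,k-r} = Z_k`. -/
theorem formal_euler_sum_formula (k : ℕ) (hk : 3 ≤ k)
    (Z : ℕ → ℕ → ℚ) (Zk : ℚ)
    (hrel : ∀ r s : ℕ, 1 ≤ r → 1 ≤ s → r + s = k →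
      Z r s + Z s r + Zk =
        ∑ p ∈ Finset.Icc 1 (k - 1),
          ((Nat.choose (p - 1) (r - 1) + Nat.choose (p - 1) (s - 1) : ℕ) : ℚ) * Z (k - p) p) :
    ∑ r ∈ Finset.Icc 1 (k - 2), Z r (k - r) = Zk := by
  have h := hrel (k - 1) 1 (by omega) le_rfl (by omega)
  have h1 : ∑ p ∈ Finset.Icc 1 (k - 1),
      ((Nat.choose (p - 1) (k - 1 - 1) + Nat.choose (p - 1) (1 - 1) : ℕ) : ℚ) * Z (k - p) p
      = Z 1 (k - 1) + ∑ p ∈ Finset.Icc 1 (k - 1), Z (k - p) p := by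
    simp only [Nat.cast_add, add_mul, Finset.sum_add_distrib, Nat.choose_zero_right,
      Nat.cast_one, one_mul]
    congr 1
    rw [Finset.sum_eq_single_of_mem (k - 1) (by simp [Finset.mem_Icc]; omega)]
    · simp [show k - (k - 1) = 1 by omega, show k - 1 - 1 = k - 2 by omega]
    · intro p hp hne
      simp only [Finset.mem_Icc] at hp
      rw [Nat.choose_eq_zero_of_lt (by omega)]
      simp
    · simp
  have h2 : ∑ p ∈ Finset.Icc 1 (k - 1), Z (k - p) p
      = ∑ r ∈ Finset.Icc 1 (k - 1), Z r (k - r) := by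
    apply Finset.sum_nbij' (fun p => k - p) (fun r => k - r) <;>
      simp only [Finset.mem_Icc] <;> intros <;> first | omega | (congr 1 <;> omega)
  have h3 : ∑ r ∈ Finset.Icc 1 (k - 1), Z r (k - r)
      = (∑ r ∈ Finset.Icc 1 (k - 2), Z r (k - r)) + Z (k - 1) 1 := by
    rw [show k - 1 = (k - 2) + 1 by omega, Finset.sum_Icc_succ_top (by omega)]
    rw [show k - (k - 2 + 1) = 1 by omega]
  rw [h1, h2, h3] at h
  linarith
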